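/- Let t ≥ s > 0 be real numbers, q a positive integer, f = Σ a_n x^n an analytic function on the closed p-adic ball of radius t in a complete subfield F of ℂ_p, and Γ ⊆ \bar B_F(s) a finite set of cardinality l ≥ 2. Set δ = inf{|γ−γ'|_p : γ ≠ γ' in Γ} and μ = sup{|f^{(m)}(γ)|_p : 0 ≤ m ≤ q−1, γ ∈ Γ}, and r_p = p^{−1/(p−1)}. If δ ≤ 1, then |f|_s ≤ max{ (s/t)^{ql} |f|_t , μ (s/δ)^{ql−1} r_p^{−(q−1)} }, where |f|_r = sup_n |a_n|_p r^n. -/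

import Mathlib

open Filter

/-- The Gauss norm `|f|_r = sup_n |a_n| r^n` of a power series with coefficients `a`. -/
noncomputable def gaussNorm {F : Type*} [NormedField F] (a : ℕ → F) (r : ℝ) : ℝ :=
  ⨆ n : ℕ, ‖a n‖ * r ^ n

/-- The `m`-th derivative `f^{(m)}(γ) = ∑_n ((n+m)!/n!) a_{n+m} γ^n` of the power series with
coefficients `a`, evaluated at `γ`. -/
noncomputable def pseriesDeriv {F : Type*} [NormedField F] (a : ℕ → F) (m : ℕ) (γ : F) : F :=
  ∑' n : ℕ, ((n + m).descFactorial m : F) * a (n + m) * γ ^ n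

open IsUltrametricDist

set_option linter.unusedSectionVars false
namespace PSz
variable {F : Type*} [NormedField F] [CompleteSpace F] [IsUltrametricDist F]

lemma unorm_add_le_max (x y : F) : ‖x + y‖ ≤ max ‖x‖ ‖y‖ := norm_add_le_max x y

lemma unorm_sub_le_max (x y : F) : ‖x - y‖ ≤ max ‖x‖ ‖y‖ := by
  rw [sub_eq_add_neg]
  exact (norm_add_le_max x (-y)).trans (by simp)

lemma mySummable {ι : Type*} {f : ι → F} (h : Tendsto f cofinite (nhds 0)) : Summable f := by
  rw [summable_iff_vanishing]
  intro U hU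
  obtain ⟨ε, hε, hball⟩ := Metric.mem_nhds_iff.mp hU
  have hfin : {i | f i ∉ Metric.ball 0 (ε/2)}.Finite := by
    have := h (Metric.ball_mem_nhds 0 (by linarith : (0:ℝ) < ε/2))
    rwa [Filter.mem_map, Filter.mem_cofinite] at this
  refine ⟨hfin.toFinset, fun T hT => ?_⟩
  apply hball
  rw [Metric.mem_ball, dist_zero_right]
  have hle : ∀ i ∈ T, ‖f i‖ ≤ ε/2 := by
    intro i hi
    have : f i ∈ Metric.ball (0:F) (ε/2) := by
      by_contra hc
      exact Finset.disjoint_left.mp hT hi (hfin.mem_toFinset.mpr hc)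
    rw [Metric.mem_ball, dist_zero_right] at this
    linarith
  calc ‖∑ i ∈ T, f i‖ ≤ ε/2 := norm_sum_le_of_forall_le_of_nonneg (by linarith) hle
    _ < ε := by linarith

/-- decay of coefficients at radius `t`. -/
def Decay (t : ℝ) (b : ℕ → F) : Prop := Tendsto (fun n => ‖b n‖ * t ^ n) atTop (nhds 0)

lemma decay_lt {t : ℝ} {b : ℕ → F} (hb : Decay t b) {ε : ℝ} (hε : 0 < ε) :
    ∃ K, ∀ n, K ≤ n → ‖b n‖ * t ^ n < ε := by
  obtain ⟨K, hK⟩ := Metric.tendsto_atTop.mp hb ε hε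
  refine ⟨K, fun n hn => ?_⟩
  have := hK n hn
  rw [Real.dist_eq, sub_zero] at this
  exact lt_of_le_of_lt (le_abs_self _) this

lemma mySummable2 {g : ℕ × ℕ → F} {w : ℕ → ℝ} (hw : Tendsto w atTop (nhds 0))
    (hg : ∀ p, ‖g p‖ ≤ w (p.1 + p.2)) : Summable g := by
  apply mySummable
  intro U hU
  rw [Filter.mem_map, Filter.mem_cofinite]
  obtain ⟨ε, hε, hball⟩ := Metric.mem_nhds_iff.mp hU
  obtain ⟨K, hK⟩ := Metric.tendsto_atTop.mp hw ε hε
  apply Set.Finite.subset (Set.Finite.prod (Set.finite_Iio K) (Set.finite_Iio K))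
  intro q hq
  simp only [Set.mem_compl_iff, Set.mem_preimage] at hq
  by_contra hc
  apply hq; apply hball
  rw [Metric.mem_ball, dist_zero_right]
  have hK' : K ≤ q.1 + q.2 := by
    simp only [Set.mem_prod, Set.mem_Iio, not_and_or, not_lt] at hc
    rcases hc with h | h <;> omega
  have := hK _ hK'
  rw [Real.dist_eq, sub_zero] at this
  exact lt_of_le_of_lt ((hg q).trans (le_abs_self _)) this

lemma mySummable2' {g : ℕ × ℕ → F} {w : ℕ → ℝ} (hw : Tendsto w atTop (nhds 0))
    (hg : ∀ p, g p ≠ 0 → ‖g p‖ ≤ w p.1 ∧ p.2 ≤ p.1) : Summable g := by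
  apply mySummable
  intro U hU
  rw [Filter.mem_map, Filter.mem_cofinite]
  obtain ⟨ε, hε, hball⟩ := Metric.mem_nhds_iff.mp hU
  obtain ⟨K, hK⟩ := Metric.tendsto_atTop.mp hw ε hε
  apply Set.Finite.subset (Set.Finite.prod (Set.finite_Iio K) (Set.finite_Iio K))
  intro q hq
  simp only [Set.mem_compl_iff, Set.mem_preimage] at hq
  have hg0 : g q ≠ 0 := by
    intro h
    exact hq (h ▸ hball (by simpa [Metric.mem_ball] using hε))
  obtain ⟨hgle, hq21⟩ := hg q hg0
  have hq1 : q.1 < K := by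
    by_contra hc
    apply hq; apply hball
    rw [Metric.mem_ball, dist_zero_right]
    have := hK q.1 (not_lt.mp hc)
    rw [Real.dist_eq, sub_zero] at this
    exact lt_of_le_of_lt (hgle.trans (le_abs_self _)) this
  refine Set.mem_prod.mpr ⟨hq1, ?_⟩
  simp only [Set.mem_Iio]
  omega

noncomputable def ev (b : ℕ → F) (y : F) : F := ∑' n, b n * y ^ n

noncomputable def Dop (γ : F) (b : ℕ → F) : ℕ → F := fun k => ∑' n, b (n + (k + 1)) * γ ^ n

variable {t : ℝ} {b : ℕ → F} {y γ α β : F}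

lemma summable_shift (ht : 0 < t) (hb : Decay t b) (hy : ‖y‖ ≤ t) (k : ℕ) :
    Summable fun n => b (n + k) * y ^ n := by
  apply mySummable
  rw [Nat.cofinite_eq_atTop, tendsto_zero_iff_norm_tendsto_zero]
  apply squeeze_zero (g := fun n => (‖b (n + k)‖ * t ^ (n + k)) / t ^ k) (fun n => norm_nonneg _)
  · intro n
    have hrw : (‖b (n + k)‖ * t ^ (n + k)) / t ^ k = ‖b (n + k)‖ * t ^ n := by
      rw [pow_add]
      field_simp
    rw [norm_mul, norm_pow, hrw]
    have h1 : ‖y‖ ^ n ≤ t ^ n := pow_le_pow_left₀ (norm_nonneg y) hy n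
    exact mul_le_mul_of_nonneg_left h1 (norm_nonneg _)
  · have := (hb.comp (tendsto_add_atTop_nat k)).div_const (t ^ k)
    simpa using this

lemma summable_pow (ht : 0 < t) (hb : Decay t b) (hy : ‖y‖ ≤ t) :
    Summable fun n => b n * y ^ n := by
  simpa using summable_shift ht hb hy 0

lemma norm_Dop_le (ht : 0 < t) (hγ : ‖γ‖ ≤ t) {C : ℝ} (hC : 0 ≤ C) (k : ℕ)
    (hbd : ∀ n, k + 1 ≤ n → ‖b n‖ * t ^ n ≤ C) :
    ‖Dop γ b k‖ * t ^ (k + 1) ≤ C := by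
  have hterm : ∀ n, ‖b (n + (k + 1)) * γ ^ n‖ ≤ C / t ^ (k + 1) := by
    intro n
    rw [norm_mul, norm_pow]
    have h1 : ‖b (n + (k + 1))‖ * t ^ (n + (k + 1)) ≤ C := hbd _ (by omega)
    rw [pow_add, ← mul_assoc] at h1
    have h2 : ‖b (n + (k + 1))‖ * ‖γ‖ ^ n ≤ ‖b (n + (k + 1))‖ * t ^ n :=
      mul_le_mul_of_nonneg_left (pow_le_pow_left₀ (norm_nonneg γ) hγ n) (norm_nonneg _)
    refine h2.trans ?_
    rw [le_div_iff₀ (by positivity)]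
    linarith [h1]
  have := norm_tsum_le_of_forall_le_of_nonneg (div_nonneg hC (by positivity)) hterm
  rw [Dop]
  calc ‖∑' n, b (n + (k + 1)) * γ ^ n‖ * t ^ (k + 1)
      ≤ (C / t ^ (k + 1)) * t ^ (k + 1) :=
        mul_le_mul_of_nonneg_right this (by positivity)
    _ = C := div_mul_cancel₀ _ (by positivity)

lemma Dop_decay (ht : 0 < t) (hγ : ‖γ‖ ≤ t) (hb : Decay t b) : Decay t (Dop γ b) := by
  rw [Decay, Metric.tendsto_atTop]
  intro ε hε
  obtain ⟨K, hK⟩ := decay_lt hb (show (0:ℝ) < ε * t / 2 by positivity)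
  refine ⟨K, fun k hk => ?_⟩
  rw [Real.dist_eq, sub_zero, abs_of_nonneg (by positivity)]
  have h1 : ‖Dop γ b k‖ * t ^ (k + 1) ≤ ε * t / 2 :=
    norm_Dop_le ht hγ (by positivity) k (fun n hn => (hK n (by omega)).le)
  rw [pow_succ, ← mul_assoc] at h1
  have h2 : ‖Dop γ b k‖ * t ^ k ≤ ε / 2 := by
    rw [← mul_le_mul_iff_of_pos_right ht]
    calc ‖Dop γ b k‖ * t ^ k * t ≤ ε * t / 2 := h1
      _ = ε / 2 * t := by ring
  linarith

lemma shift_eq (ht : 0 < t) (hb : Decay t b) (hγ : ‖γ‖ ≤ t) (k : ℕ) :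
    (∑' n, b (n + k) * γ ^ n) = b k + γ * Dop γ b k := by
  rw [Summable.tsum_eq_zero_add (summable_shift ht hb hγ k)]
  congr 1
  · simp
  · rw [Dop, ← tsum_mul_left]
    congr 1
    funext n
    rw [show n + 1 + k = n + (k + 1) by omega]
    ring

lemma coeff_zero (ht : 0 < t) (hb : Decay t b) (hγ : ‖γ‖ ≤ t) :
    b 0 = ev b γ - γ * Dop γ b 0 := by
  have := shift_eq ht hb hγ 0
  simp only [Nat.add_zero] at this
  rw [ev, this]
  ring

lemma coeff_succ (ht : 0 < t) (hb : Decay t b) (hγ : ‖γ‖ ≤ t) (n : ℕ) :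
    b (n + 1) = Dop γ b n - γ * Dop γ b (n + 1) := by
  have := shift_eq ht hb hγ (n + 1)
  have h2 : Dop γ b n = ∑' m, b (m + (n + 1)) * γ ^ m := rfl
  rw [← h2] at this
  rw [this]
  ring

lemma tsum_shear {G H : ℕ × ℕ → F}
    (hH0 : ∀ p : ℕ × ℕ, ¬ p.2 < p.1 → H p = 0)
    (hmatch : ∀ k m : ℕ, H (m + (k + 1), k) = G (k, m)) :
    ∑' p, H p = ∑' p, G p := by
  apply tsum_eq_tsum_of_ne_zero_bij (fun x => (x.1.2 + (x.1.1 + 1), x.1.1))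
  · rintro ⟨⟨k1, m1⟩, h1⟩ ⟨⟨k2, m2⟩, h2⟩ h
    simp only [Prod.mk.injEq] at h
    apply Subtype.ext
    simp only [Prod.mk.injEq]
    omega
  · rintro ⟨n, k⟩ hnk
    have hlt : k < n := by
      by_contra hc
      exact hnk (hH0 (n, k) hc)
    have hGnz : G (k, n - 1 - k) ≠ 0 := by
      have := hmatch k (n - 1 - k)
      rw [show n - 1 - k + (k + 1) = n by omega] at this
      rw [← this]
      exact hnk
    exact ⟨⟨(k, n - 1 - k), hGnz⟩, by simp only; congr 1; omega⟩
  · rintro ⟨⟨k, m⟩, h⟩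
    exact hmatch k m

lemma tsum_shear' {G H : ℕ × ℕ → F}
    (hH0 : ∀ p : ℕ × ℕ, ¬ p.2 ≤ p.1 → H p = 0)
    (hmatch : ∀ n m : ℕ, H (n + m, n) = G (n, m)) :
    ∑' p, H p = ∑' p, G p := by
  apply tsum_eq_tsum_of_ne_zero_bij (fun x => (x.1.1 + x.1.2, x.1.1))
  · rintro ⟨⟨k1, m1⟩, h1⟩ ⟨⟨k2, m2⟩, h2⟩ h
    simp only [Prod.mk.injEq] at h
    apply Subtype.ext
    simp only [Prod.mk.injEq]
    omega
  · rintro ⟨N, n⟩ hnk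
    have hle : n ≤ N := by
      by_contra hc
      exact hnk (hH0 (N, n) hc)
    have hGnz : G (n, N - n) ≠ 0 := by
      have := hmatch n (N - n)
      rw [show n + (N - n) = N by omega] at this
      rw [← this]
      exact hnk
    exact ⟨⟨(n, N - n), hGnz⟩, by simp only; congr 1; omega⟩
  · rintro ⟨⟨k, m⟩, h⟩
    exact hmatch k m

lemma decay_shift_tendsto (ht : 0 < t) (hb : Decay t b) (j : ℕ) :
    Tendsto (fun n => ‖b (n + j)‖ * t ^ n) atTop (nhds 0) := by
  have h1 := (hb.comp (tendsto_add_atTop_nat j)).div_const (t ^ j)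
  have h2 : (fun n => ‖b (n + j)‖ * t ^ n) = fun n => ‖b (n + j)‖ * t ^ (n + j) / t ^ j := by
    funext n
    rw [pow_add]
    field_simp
  rw [h2]
  simpa using h1

lemma summable_S (ht : 0 < t) (hb : Decay t b) (hγ : ‖γ‖ ≤ t) (hy : ‖y‖ ≤ t) (j : ℕ) :
    Summable fun p : ℕ × ℕ => b ((p.1 + p.2) + (j + 1)) * γ ^ p.2 * y ^ p.1 := by
  apply mySummable2 (w := fun n => ‖b (n + (j + 1))‖ * t ^ n) (decay_shift_tendsto ht hb (j+1))
  intro p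
  rw [norm_mul, norm_mul, norm_pow, norm_pow]
  calc ‖b (p.1 + p.2 + (j + 1))‖ * ‖γ‖ ^ p.2 * ‖y‖ ^ p.1
      ≤ ‖b (p.1 + p.2 + (j + 1))‖ * t ^ p.2 * t ^ p.1 := by
        apply mul_le_mul (mul_le_mul_of_nonneg_left (pow_le_pow_left₀ (norm_nonneg γ) hγ _)
          (norm_nonneg _)) (pow_le_pow_left₀ (norm_nonneg y) hy _) (by positivity) (by positivity)
    _ = ‖b (p.1 + p.2 + (j + 1))‖ * t ^ (p.1 + p.2) := by
        rw [pow_add]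
        ring

lemma ev_Dop (ht : 0 < t) (hb : Decay t b) (hγ : ‖γ‖ ≤ t) (hy : ‖y‖ ≤ t) :
    ev (Dop γ b) y = ∑' p : ℕ × ℕ, b ((p.1 + p.2) + (0 + 1)) * γ ^ p.2 * y ^ p.1 := by
  rw [Summable.tsum_prod' (summable_S ht hb hγ hy 0)
    (fun k => ((summable_shift ht hb hγ (k + 1)).mul_right (y ^ k)).congr
      (fun m => by rw [show m + (k + 1) = k + m + (0 + 1) by omega]))]
  rw [ev]
  congr 1
  funext k
  rw [Dop, ← tsum_mul_right]
  congr 1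
  funext m
  rw [show m + (k + 1) = k + m + (0 + 1) by omega]

lemma ev_sub_ev (ht : 0 < t) (hb : Decay t b) (hγ : ‖γ‖ ≤ t) (hy : ‖y‖ ≤ t) :
    ev b y - ev b γ = (y - γ) * ev (Dop γ b) y := by
  classical
  have hTS : (∑' p : ℕ × ℕ, if p.2 < p.1 then b p.1 * y ^ p.2 * γ ^ (p.1 - 1 - p.2) else 0)
      = ∑' p : ℕ × ℕ, b ((p.1 + p.2) + (0 + 1)) * γ ^ p.2 * y ^ p.1 := by
    apply tsum_shear
    · intro p hp
      exact if_neg hp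
    · intro k m
      rw [if_pos (by omega : k < m + (k + 1))]
      rw [show m + (k + 1) - 1 - k = m by omega, show k + m + (0 + 1) = m + (k + 1) by omega]
      ring
  have hT : Summable (fun p : ℕ × ℕ =>
      if p.2 < p.1 then b p.1 * y ^ p.2 * γ ^ (p.1 - 1 - p.2) else 0) := by
    apply mySummable2' (w := fun n => ‖b n‖ * t ^ n / t)
      (by simpa using hb.div_const t : Tendsto (fun n => ‖b n‖ * t ^ n / t) atTop (nhds 0))
    · intro p hp
      have hlt : p.2 < p.1 := by
        by_contra hc
        exact hp (if_neg hc)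
      constructor
      · rw [if_pos hlt, norm_mul, norm_mul, norm_pow, norm_pow]
        have h1 : ‖b p.1‖ * ‖y‖ ^ p.2 * ‖γ‖ ^ (p.1 - 1 - p.2)
            ≤ ‖b p.1‖ * t ^ p.2 * t ^ (p.1 - 1 - p.2) :=
          mul_le_mul (mul_le_mul_of_nonneg_left (pow_le_pow_left₀ (norm_nonneg y) hy _)
            (norm_nonneg _)) (pow_le_pow_left₀ (norm_nonneg γ) hγ _) (by positivity) (by positivity)
        refine h1.trans (le_of_eq ?_)
        rw [mul_assoc, ← pow_add, show p.2 + (p.1 - 1 - p.2) = p.1 - 1 by omega,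
          show p.1 = (p.1 - 1) + 1 by omega, pow_succ]
        field_simp
        rw [show p.1 - 1 + 1 - 1 = p.1 - 1 by omega]
      · omega
  have h3 : (∑' p : ℕ × ℕ, if p.2 < p.1 then b p.1 * y ^ p.2 * γ ^ (p.1 - 1 - p.2) else 0)
      = ∑' n, b n * (∑ k ∈ Finset.range n, y ^ k * γ ^ (n - 1 - k)) := by
    rw [Summable.tsum_prod' hT (fun n => summable_of_ne_finset_zero (s := Finset.range n)
      (fun k hk => if_neg (by simpa using hk)))]
    congr 1
    funext n
    rw [tsum_eq_sum (s := Finset.range n) (fun k hk => if_neg (by simpa using hk)),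
      Finset.mul_sum]
    apply Finset.sum_congr rfl
    intro k hk
    rw [if_pos (Finset.mem_range.mp hk)]
    ring
  rw [ev, ev, ← (summable_pow ht hb hy).tsum_sub (summable_pow ht hb hγ)]
  have h4 : ∀ n : ℕ, b n * y ^ n - b n * γ ^ n
      = (y - γ) * (b n * (∑ k ∈ Finset.range n, y ^ k * γ ^ (n - 1 - k))) := by
    intro n
    rw [← mul_sub, ← geom_sum₂_mul y γ n]
    ring
  calc (∑' n, (b n * y ^ n - b n * γ ^ n))
      = ∑' n, (y - γ) * (b n * (∑ k ∈ Finset.range n, y ^ k * γ ^ (n - 1 - k))) := by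
        congr 1
        funext n
        exact h4 n
    _ = (y - γ) * ∑' n, b n * (∑ k ∈ Finset.range n, y ^ k * γ ^ (n - 1 - k)) := tsum_mul_left
    _ = (y - γ) * ev (Dop γ b) y := by rw [← h3, hTS, ← ev_Dop ht hb hγ hy]

lemma ev_swap (ht : 0 < t) (hb : Decay t b) (hγ : ‖γ‖ ≤ t) (hy : ‖y‖ ≤ t) :
    ev (Dop γ b) y = ev (Dop y b) γ := by
  rw [ev_Dop ht hb hγ hy, ev_Dop ht hb hy hγ]
  rw [← (Equiv.prodComm ℕ ℕ).tsum_eq (fun p : ℕ × ℕ => b ((p.1 + p.2) + (0 + 1)) * y ^ p.2 * γ ^ p.1)]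
  congr 1
  funext p
  simp only [Equiv.prodComm_apply, Prod.fst_swap, Prod.snd_swap]
  rw [show p.2 + p.1 = p.1 + p.2 by omega]
  ring

lemma Dop_tsum_pair (ht : 0 < t) (hb : Decay t b) (hβ : ‖β‖ ≤ t) (hα : ‖α‖ ≤ t) (k : ℕ) :
    Dop α (Dop β b) k = ∑' p : ℕ × ℕ, b ((p.1 + p.2) + (k + 2)) * β ^ p.2 * α ^ p.1 := by
  rw [Summable.tsum_prod' (summable_S ht hb hβ hα (k + 1))
    (fun n => ((summable_shift ht hb hβ (n + (k + 1) + 1)).mul_right (α ^ n)).congr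
      (fun m => by rw [show m + (n + (k + 1) + 1) = n + m + (k + 1 + 1) by omega]))]
  rw [Dop]
  congr 1
  funext n
  rw [show Dop β b (n + (k + 1)) = ∑' m, b (m + (n + (k + 1) + 1)) * β ^ m from rfl,
    ← tsum_mul_right]
  congr 1
  funext m
  rw [show m + (n + (k + 1) + 1) = n + m + (k + 1 + 1) by omega]

lemma Dop_comm (ht : 0 < t) (hb : Decay t b) (hα : ‖α‖ ≤ t) (hβ : ‖β‖ ≤ t) :
    Dop α (Dop β b) = Dop β (Dop α b) := by
  funext k
  rw [Dop_tsum_pair ht hb hβ hα k, Dop_tsum_pair ht hb hα hβ k]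
  rw [← (Equiv.prodComm ℕ ℕ).tsum_eq (fun p : ℕ × ℕ => b ((p.1 + p.2) + (k + 2)) * α ^ p.2 * β ^ p.1)]
  congr 1
  funext p
  simp only [Equiv.prodComm_apply, Prod.fst_swap, Prod.snd_swap]
  rw [show p.2 + p.1 = p.1 + p.2 by omega]
  ring

noncomputable def hasse (j : ℕ) (b : ℕ → F) (γ : F) : F :=
  ∑' n, (((n + j).choose j : ℕ) : F) * b (n + j) * γ ^ n

lemma hasse_zero (b : ℕ → F) (γ : F) : hasse 0 b γ = ev b γ := by
  rw [hasse, ev]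
  congr 1
  funext n
  simp

lemma summable_V (ht : 0 < t) (hb : Decay t b) (hγ : ‖γ‖ ≤ t) (j : ℕ) :
    Summable fun p : ℕ × ℕ =>
      (((p.1 + j).choose j : ℕ) : F) * b ((p.1 + p.2) + (j + 1)) * γ ^ (p.1 + p.2) := by
  apply mySummable2 (w := fun n => ‖b (n + (j + 1))‖ * t ^ n) (decay_shift_tendsto ht hb (j + 1))
  intro p
  rw [norm_mul, norm_mul, norm_pow]
  calc ‖(((p.1 + j).choose j : ℕ) : F)‖ * ‖b (p.1 + p.2 + (j + 1))‖ * ‖γ‖ ^ (p.1 + p.2)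
      ≤ 1 * ‖b (p.1 + p.2 + (j + 1))‖ * t ^ (p.1 + p.2) := by
        apply mul_le_mul (mul_le_mul_of_nonneg_right (norm_natCast_le_one F _) (norm_nonneg _))
          (pow_le_pow_left₀ (norm_nonneg γ) hγ _) (by positivity) (by positivity)
    _ = ‖b (p.1 + p.2 + (j + 1))‖ * t ^ (p.1 + p.2) := by ring

lemma hasse_Dop (ht : 0 < t) (hb : Decay t b) (hγ : ‖γ‖ ≤ t) (j : ℕ) :
    hasse j (Dop γ b) γ = hasse (j + 1) b γ := by
  classical
  have stepA : hasse j (Dop γ b) γ = ∑' p : ℕ × ℕ,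
      (((p.1 + j).choose j : ℕ) : F) * b ((p.1 + p.2) + (j + 1)) * γ ^ (p.1 + p.2) := by
    rw [Summable.tsum_prod' (summable_V ht hb hγ j) (fun n =>
      ((summable_shift ht hb hγ (n + j + 1)).mul_left
        ((((n + j).choose j : ℕ) : F) * γ ^ n)).congr (fun m => by
          rw [show n + m + (j + 1) = m + (n + j + 1) by omega, pow_add]
          ring))]
    rw [hasse]
    congr 1
    funext n
    rw [show Dop γ b (n + j) = ∑' m, b (m + (n + j + 1)) * γ ^ m from rfl, ← tsum_mul_left,
      ← tsum_mul_right]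
    congr 1
    funext m
    rw [show n + m + (j + 1) = m + (n + j + 1) by omega, pow_add]
    ring
  have stepB : (∑' p : ℕ × ℕ, if p.2 ≤ p.1 then
        (((p.2 + j).choose j : ℕ) : F) * b (p.1 + (j + 1)) * γ ^ p.1 else 0)
      = ∑' p : ℕ × ℕ,
        (((p.1 + j).choose j : ℕ) : F) * b ((p.1 + p.2) + (j + 1)) * γ ^ (p.1 + p.2) := by
    apply tsum_shear'
    · intro p hp
      exact if_neg hp
    · intro n m
      rw [if_pos (by omega : n ≤ n + m)]
  have hH : Summable (fun p : ℕ × ℕ => if p.2 ≤ p.1 then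
      (((p.2 + j).choose j : ℕ) : F) * b (p.1 + (j + 1)) * γ ^ p.1 else 0) := by
    apply mySummable2' (w := fun n => ‖b (n + (j + 1))‖ * t ^ n) (decay_shift_tendsto ht hb (j + 1))
    intro p hp
    have hle : p.2 ≤ p.1 := by
      by_contra hc
      exact hp (if_neg hc)
    refine ⟨?_, hle⟩
    rw [if_pos hle, norm_mul, norm_mul, norm_pow]
    calc ‖(((p.2 + j).choose j : ℕ) : F)‖ * ‖b (p.1 + (j + 1))‖ * ‖γ‖ ^ p.1
        ≤ 1 * ‖b (p.1 + (j + 1))‖ * t ^ p.1 := by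
          apply mul_le_mul (mul_le_mul_of_nonneg_right (norm_natCast_le_one F _) (norm_nonneg _))
            (pow_le_pow_left₀ (norm_nonneg γ) hγ _) (by positivity) (by positivity)
      _ = ‖b (p.1 + (j + 1))‖ * t ^ p.1 := by ring
  rw [stepA, ← stepB]
  rw [Summable.tsum_prod' hH (fun N => summable_of_ne_finset_zero (s := Finset.range (N + 1))
    (fun k hk => if_neg (by simp only [Finset.mem_range] at hk; omega)))]
  rw [hasse]
  congr 1
  funext N
  rw [tsum_eq_sum (s := Finset.range (N + 1))
    (fun k hk => if_neg (by simp only [Finset.mem_range] at hk; omega))]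
  have hsum : ∑ k ∈ Finset.range (N + 1), (if k ≤ N then
      (((k + j).choose j : ℕ) : F) * b (N + (j + 1)) * γ ^ N else 0)
      = (∑ k ∈ Finset.range (N + 1), (((k + j).choose j : ℕ) : F)) * (b (N + (j + 1)) * γ ^ N) := by
    rw [Finset.sum_mul]
    apply Finset.sum_congr rfl
    intro k hk
    rw [if_pos (by simp only [Finset.mem_range] at hk; omega)]
    ring
  rw [hsum, ← Nat.cast_sum, Nat.sum_range_add_choose N j,
    show N + j + 1 = N + (j + 1) by omega]
  ring

lemma decay_iter (ht : 0 < t) (hγ : ‖γ‖ ≤ t) (hb : Decay t b) (j : ℕ) :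
    Decay t ((Dop γ)^[j] b) := by
  induction j with
  | zero => exact hb
  | succ j ih =>
    rw [Function.iterate_succ_apply']
    exact Dop_decay ht hγ ih

lemma ev_iter_Dop (ht : 0 < t) (hγ : ‖γ‖ ≤ t) :
    ∀ (j : ℕ) (b : ℕ → F), Decay t b → ev ((Dop γ)^[j] b) γ = hasse j b γ := by
  intro j
  induction j with
  | zero =>
    intro b _
    rw [Function.iterate_zero_apply, hasse_zero]
  | succ j ih =>
    intro b hb
    rw [Function.iterate_succ_apply, ih (Dop γ b) (Dop_decay ht hγ hb), hasse_Dop ht hb hγ]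

lemma norm_natCast_eq (p : ℕ) (hp : p.Prime) (hpF : ‖(p : F)‖ = (p : ℝ)⁻¹) :
    ∀ n : ℕ, n ≠ 0 → ‖(n : F)‖ = ((p : ℝ) ^ padicValNat p n)⁻¹ := by
  haveI : Fact p.Prime := ⟨hp⟩
  intro n
  induction n using Nat.strong_induction_on with
  | _ n ih =>
    intro hn
    by_cases hdvd : p ∣ n
    · obtain ⟨k, rfl⟩ := hdvd
      have hk : k ≠ 0 := by
        rintro rfl
        simp at hn
      have hklt : k < p * k := by
        nlinarith [hp.two_le, Nat.pos_of_ne_zero hk]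
      rw [Nat.cast_mul, norm_mul, hpF, ih k hklt hk,
        padicValNat.mul (Nat.Prime.ne_zero hp) hk, padicValNat.self hp.one_lt,
        pow_add, pow_one, mul_inv]
    · rw [padicValNat.eq_zero_of_not_dvd hdvd, pow_zero, inv_one]
      refine le_antisymm (norm_natCast_le_one F n) ?_
      have hco : Nat.Coprime p n := (Nat.Prime.coprime_iff_not_dvd hp).mpr hdvd
      have hbz := Nat.gcd_eq_gcd_ab p n
      rw [hco.gcd_eq_one] at hbz
      have hF : (1 : F) = (p : F) * ((Nat.gcdA p n : ℤ) : F) + (n : F) * ((Nat.gcdB p n : ℤ) : F) := by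
        have := congrArg (fun z : ℤ => (z : F)) hbz
        push_cast at this
        exact this
      have hnorm : (1 : ℝ) ≤ max ((p : ℝ)⁻¹) ‖(n : F)‖ := by
        calc (1 : ℝ) = ‖(1 : F)‖ := by simp
          _ ≤ max ‖(p : F) * ((Nat.gcdA p n : ℤ) : F)‖ ‖(n : F) * ((Nat.gcdB p n : ℤ) : F)‖ := by
            rw [hF]
            exact unorm_add_le_max _ _
          _ ≤ max ((p : ℝ)⁻¹) ‖(n : F)‖ := by
            apply max_le_max
            · rw [norm_mul, hpF]
              calc (p : ℝ)⁻¹ * ‖((Nat.gcdA p n : ℤ) : F)‖ ≤ (p : ℝ)⁻¹ * 1 :=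
                  mul_le_mul_of_nonneg_left (norm_intCast_le_one F _) (by positivity)
                _ = (p : ℝ)⁻¹ := mul_one _
            · rw [norm_mul]
              calc ‖(n : F)‖ * ‖((Nat.gcdB p n : ℤ) : F)‖ ≤ ‖(n : F)‖ * 1 :=
                  mul_le_mul_of_nonneg_left (norm_intCast_le_one F _) (norm_nonneg _)
                _ = ‖(n : F)‖ := mul_one _
      have hplt : (p : ℝ)⁻¹ < 1 := by
        rw [inv_lt_one_iff₀]
        right
        exact_mod_cast hp.one_lt
      rcases max_cases ((p : ℝ)⁻¹) ‖(n : F)‖ with ⟨heq, _⟩ | ⟨heq, _⟩ <;> rw [heq] at hnorm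
      · linarith
      · exact hnorm

lemma norm_factorial_inv_le (p : ℕ) (hp : p.Prime) (hpF : ‖(p : F)‖ = (p : ℝ)⁻¹)
    {q m : ℕ} (hq : 0 < q) (hm : m < q) :
    ‖((m.factorial : ℕ) : F)‖⁻¹ ≤ (p : ℝ) ^ (((q - 1 : ℕ) : ℝ) / ((p : ℝ) - 1)) := by
  haveI : Fact p.Prime := ⟨hp⟩
  rw [norm_natCast_eq p hp hpF _ m.factorial_ne_zero, inv_inv]
  have hleg : (p - 1) * padicValNat p m.factorial = m - (p.digits m).sum :=
    sub_one_mul_padicValNat_factorial m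
  have hv : (p - 1) * padicValNat p m.factorial ≤ q - 1 := by omega
  have hp1 : (1 : ℝ) < (p : ℝ) := by exact_mod_cast hp.one_lt
  rw [← Real.rpow_natCast ((p : ℝ)) (padicValNat p m.factorial)]
  rw [Real.rpow_le_rpow_left_iff hp1]
  rw [le_div_iff₀ (by linarith : (0 : ℝ) < (p : ℝ) - 1)]
  have hcast : (((p - 1) * padicValNat p m.factorial : ℕ) : ℝ)
      ≤ (((q - 1 : ℕ)) : ℝ) := by exact_mod_cast hv
  rw [Nat.cast_mul, Nat.cast_sub hp.one_le] at hcast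
  push_cast at hcast ⊢
  linarith

noncomputable def chainA (a x : ℕ → F) (i : ℕ) : ℕ → ℕ → F
  | 0 => a
  | (j + 1) => Dop (x (i + j)) (chainA a x i j)

noncomputable def dd (a x : ℕ → F) (i j : ℕ) : F := ev (chainA a x i j) (x (i + j))

variable {a x : ℕ → F}

lemma chainA_decay (ht : 0 < t) (ha : Decay t a) (hx : ∀ i, ‖x i‖ ≤ t) (i j : ℕ) :
    Decay t (chainA a x i j) := by
  induction j with
  | zero => exact ha
  | succ j ih => exact Dop_decay ht (hx _) ih

lemma chainA_comm (ht : 0 < t) (ha : Decay t a) (hx : ∀ i, ‖x i‖ ≤ t) :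
    ∀ j i, chainA a x i (j + 1) = Dop (x i) (chainA a x (i + 1) j) := by
  intro j
  induction j with
  | zero =>
    intro i
    show Dop (x (i + 0)) (chainA a x i 0) = _
    rw [Nat.add_zero]
    rfl
  | succ j ih =>
    intro i
    show Dop (x (i + (j + 1))) (chainA a x i (j + 1)) = _
    rw [ih i, Dop_comm ht (chainA_decay ht ha hx (i + 1) j) (hx _) (hx _)]
    apply congrArg
    rw [show i + (j + 1) = i + 1 + j by omega]
    rfl

lemma dd_swap (ht : 0 < t) (ha : Decay t a) (hx : ∀ i, ‖x i‖ ≤ t) :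
    ∀ j i, ev (chainA a x (i + 1) j) (x i) = dd a x i j := by
  intro j
  induction j with
  | zero =>
    intro i
    show ev a (x i) = ev a (x (i + 0))
    rw [Nat.add_zero]
  | succ j ih =>
    intro i
    show ev (Dop (x (i + 1 + j)) (chainA a x (i + 1) j)) (x i) = _
    rw [ev_swap ht (chainA_decay ht ha hx (i + 1) j) (hx _) (hx _)]
    rw [show x (i + 1 + j) = x (i + (j + 1)) by rw [show i + 1 + j = i + (j + 1) by omega]]
    rw [← chainA_comm ht ha hx j i]
    rfl

lemma dd_rec (ht : 0 < t) (ha : Decay t a) (hx : ∀ i, ‖x i‖ ≤ t) (i j : ℕ) :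
    (x (i + (j + 1)) - x i) * dd a x i (j + 1) = dd a x (i + 1) j - dd a x i j := by
  have hB := chainA_decay ht ha hx (i + 1) j
  have h := ev_sub_ev ht hB (hx i) (hx (i + (j + 1)))
  have e1 : ev (chainA a x (i + 1) j) (x (i + (j + 1))) = dd a x (i + 1) j := by
    rw [dd, show i + 1 + j = i + (j + 1) by omega]
  have e2 : ev (chainA a x (i + 1) j) (x i) = dd a x i j := dd_swap ht ha hx j i
  have e3 : ev (Dop (x i) (chainA a x (i + 1) j)) (x (i + (j + 1))) = dd a x i (j + 1) := by
    rw [← chainA_comm ht ha hx j i, dd]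
  rw [e1, e2, e3] at h
  linear_combination -h

lemma chainA_pure {γ : F} :
    ∀ j i, (∀ k, k < j → x (i + k) = γ) → chainA a x i j = (Dop γ)^[j] a := by
  intro j
  induction j with
  | zero => intro i _; rfl
  | succ j ih =>
    intro i hk
    show Dop (x (i + j)) (chainA a x i j) = _
    rw [hk j (by omega), ih i (fun k hkj => hk k (by omega))]
    exact (Function.iterate_succ_apply' _ _ _).symm

lemma dd_bound (ht : 0 < t) (ha : Decay t a) (hx : ∀ i, ‖x i‖ ≤ t)
    (N : ℕ) (M δ' : ℝ) (hM : 0 ≤ M) (hδ0 : 0 < δ') (hδ1 : δ' ≤ 1)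
    (hsep : ∀ i j, i < N → j < N → x i ≠ x j → δ' ≤ ‖x i - x j‖)
    (hpure : ∀ i j, i + j < N → x (i + j) = x i → ‖dd a x i j‖ ≤ M) :
    ∀ j i, i + j < N → ‖dd a x i j‖ * δ' ^ j ≤ M := by
  intro j
  induction j with
  | zero =>
    intro i hi
    simpa using hpure i 0 (by omega) (by rw [Nat.add_zero])
  | succ j ih =>
    intro i hiN
    rcases eq_or_ne (x (i + (j + 1))) (x i) with heq | hne
    · have h1 := hpure i (j + 1) hiN heq
      calc ‖dd a x i (j + 1)‖ * δ' ^ (j + 1) ≤ M * 1 :=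
          mul_le_mul h1 (pow_le_one₀ hδ0.le hδ1) (by positivity) hM
        _ = M := mul_one M
    · have hsep' := hsep (i + (j + 1)) i (by omega) (by omega) hne
      have hrec := dd_rec ht ha hx i j
      have hnorm : ‖x (i + (j + 1)) - x i‖ * ‖dd a x i (j + 1)‖
          ≤ max ‖dd a x (i + 1) j‖ ‖dd a x i j‖ := by
        rw [← norm_mul, hrec]
        exact unorm_sub_le_max _ _
      have ih1 := ih (i + 1) (by omega)
      have ih2 := ih i (by omega)
      calc ‖dd a x i (j + 1)‖ * δ' ^ (j + 1)
          = (δ' * ‖dd a x i (j + 1)‖) * δ' ^ j := by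
            rw [pow_succ]
            ring
        _ ≤ (‖x (i + (j + 1)) - x i‖ * ‖dd a x i (j + 1)‖) * δ' ^ j :=
            mul_le_mul_of_nonneg_right (mul_le_mul_of_nonneg_right hsep' (norm_nonneg _))
              (by positivity)
        _ ≤ (max ‖dd a x (i + 1) j‖ ‖dd a x i j‖) * δ' ^ j :=
            mul_le_mul_of_nonneg_right hnorm (by positivity)
        _ ≤ M := by
            rcases max_cases ‖dd a x (i + 1) j‖ ‖dd a x i j‖ with ⟨h, _⟩ | ⟨h, _⟩ <;> rw [h]
            exacts [ih1, ih2]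

lemma coeff_bound (ht : 0 < t) (ha : Decay t a) {s : ℝ} (hs : 0 < s) (hst : s ≤ t)
    (hxs : ∀ i, ‖x i‖ ≤ s) (N : ℕ) (G B : ℝ)
    (hG : ∀ n, ‖a n‖ * t ^ n ≤ G) (hG0 : 0 ≤ G)
    (hBc : ∀ j, j < N → ‖dd a x 0 j‖ * s ^ j ≤ B)
    (hB1 : G * (s / t) ^ N ≤ B) :
    ∀ n, ‖a n‖ * s ^ n ≤ B := by
  have hx_t : ∀ i, ‖x i‖ ≤ t := fun i => (hxs i).trans hst
  have tbound : ∀ j n, ‖chainA a x 0 j n‖ * t ^ (n + j) ≤ G := by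
    intro j
    induction j with
    | zero => intro n; simpa [chainA] using hG n
    | succ j ih =>
      intro n
      have hbd : ∀ m, n + 1 ≤ m → ‖chainA a x 0 j m‖ * t ^ m ≤ G / t ^ j := by
        intro m _
        rw [le_div_iff₀ (by positivity)]
        have := ih m
        rw [pow_add] at this
        linarith [this]
      have h := norm_Dop_le (b := chainA a x 0 j) ht (hx_t (0 + j))
        (div_nonneg hG0 (by positivity)) n hbd
      have hA : chainA a x 0 (j + 1) n = Dop (x (0 + j)) (chainA a x 0 j) n := rfl
      rw [hA, show n + (j + 1) = (n + 1) + j by omega, pow_add, ← mul_assoc]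
      calc ‖Dop (x (0 + j)) (chainA a x 0 j) n‖ * t ^ (n + 1) * t ^ j
          ≤ (G / t ^ j) * t ^ j := mul_le_mul_of_nonneg_right h (by positivity)
        _ = G := div_mul_cancel₀ _ (by positivity)
  have main : ∀ m j, j + m = N → ∀ n, ‖chainA a x 0 j n‖ * s ^ (n + j) ≤ B := by
    intro m
    induction m with
    | zero =>
      intro j hj n
      have hjN : j = N := by omega
      subst hjN
      have h1 := tbound j n
      have hs' : s ^ (n + j) = t ^ (n + j) * (s / t) ^ (n + j) := by
        rw [div_pow]
        field_simp
      calc ‖chainA a x 0 j n‖ * s ^ (n + j)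
          = (‖chainA a x 0 j n‖ * t ^ (n + j)) * (s / t) ^ (n + j) := by
            rw [hs']
            ring
        _ ≤ G * (s / t) ^ (n + j) := mul_le_mul_of_nonneg_right h1 (by positivity)
        _ ≤ G * (s / t) ^ j := mul_le_mul_of_nonneg_left
            (pow_le_pow_of_le_one (by positivity) (div_le_one_of_le₀ hst ht.le) (by omega)) hG0
        _ ≤ B := hB1
    | succ m ih =>
      intro j hj n
      have hjN : j < N := by omega
      have hAdec : Decay t (chainA a x 0 j) := chainA_decay ht ha hx_t 0 j
      have hih := ih (j + 1) (by omega)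
      cases n with
      | zero =>
        have h0 : chainA a x 0 j 0 = dd a x 0 j - x (0 + j) * chainA a x 0 (j + 1) 0 := by
          rw [dd]
          exact coeff_zero ht hAdec (hx_t (0 + j))
        rw [h0]
        have h1 : ‖dd a x 0 j‖ * s ^ (0 + j) ≤ B := by
          rw [Nat.zero_add]
          exact hBc j hjN
        have h2 : ‖x (0 + j) * chainA a x 0 (j + 1) 0‖ * s ^ (0 + j) ≤ B := by
          rw [norm_mul]
          calc ‖x (0 + j)‖ * ‖chainA a x 0 (j + 1) 0‖ * s ^ (0 + j)
              ≤ s * ‖chainA a x 0 (j + 1) 0‖ * s ^ (0 + j) :=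
                mul_le_mul_of_nonneg_right
                  (mul_le_mul_of_nonneg_right (hxs _) (norm_nonneg _)) (by positivity)
            _ = ‖chainA a x 0 (j + 1) 0‖ * s ^ (0 + (j + 1)) := by
                rw [show 0 + (j + 1) = (0 + j) + 1 by omega, pow_succ]
                ring
            _ ≤ B := hih 0
        calc ‖dd a x 0 j - x (0 + j) * chainA a x 0 (j + 1) 0‖ * s ^ (0 + j)
            ≤ max ‖dd a x 0 j‖ ‖x (0 + j) * chainA a x 0 (j + 1) 0‖ * s ^ (0 + j) :=
              mul_le_mul_of_nonneg_right (unorm_sub_le_max _ _) (by positivity)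
          _ = max (‖dd a x 0 j‖ * s ^ (0 + j))
              (‖x (0 + j) * chainA a x 0 (j + 1) 0‖ * s ^ (0 + j)) :=
              max_mul_of_nonneg _ _ (by positivity)
          _ ≤ B := max_le h1 h2
      | succ n =>
        have h0 : chainA a x 0 j (n + 1)
            = chainA a x 0 (j + 1) n - x (0 + j) * chainA a x 0 (j + 1) (n + 1) :=
          coeff_succ ht hAdec (hx_t (0 + j)) n
        rw [h0]
        have h1 : ‖chainA a x 0 (j + 1) n‖ * s ^ ((n + 1) + j) ≤ B := by
          rw [show (n + 1) + j = n + (j + 1) by omega]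
          exact hih n
        have h2 : ‖x (0 + j) * chainA a x 0 (j + 1) (n + 1)‖ * s ^ ((n + 1) + j) ≤ B := by
          rw [norm_mul]
          calc ‖x (0 + j)‖ * ‖chainA a x 0 (j + 1) (n + 1)‖ * s ^ ((n + 1) + j)
              ≤ s * ‖chainA a x 0 (j + 1) (n + 1)‖ * s ^ ((n + 1) + j) :=
                mul_le_mul_of_nonneg_right
                  (mul_le_mul_of_nonneg_right (hxs _) (norm_nonneg _)) (by positivity)
            _ = ‖chainA a x 0 (j + 1) (n + 1)‖ * s ^ ((n + 1) + (j + 1)) := by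
                rw [show (n + 1) + (j + 1) = ((n + 1) + j) + 1 by omega, pow_succ]
                ring
            _ ≤ B := hih (n + 1)
        calc ‖chainA a x 0 (j + 1) n - x (0 + j) * chainA a x 0 (j + 1) (n + 1)‖ * s ^ ((n + 1) + j)
            ≤ max ‖chainA a x 0 (j + 1) n‖ ‖x (0 + j) * chainA a x 0 (j + 1) (n + 1)‖
                * s ^ ((n + 1) + j) :=
              mul_le_mul_of_nonneg_right (unorm_sub_le_max _ _) (by positivity)
          _ = max (‖chainA a x 0 (j + 1) n‖ * s ^ ((n + 1) + j))
              (‖x (0 + j) * chainA a x 0 (j + 1) (n + 1)‖ * s ^ ((n + 1) + j)) :=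
              max_mul_of_nonneg _ _ (by positivity)
          _ ≤ B := max_le h1 h2
  intro n
  have := main N 0 (by omega) n
  simpa [chainA] using this

lemma pseriesDeriv_eq_hasse (a : ℕ → F) (m : ℕ) (γ : F) :
    pseriesDeriv a m γ = ((m.factorial : ℕ) : F) * hasse m a γ := by
  rw [pseriesDeriv, hasse, ← tsum_mul_left]
  congr 1
  funext n
  rw [Nat.descFactorial_eq_factorial_mul_choose]
  push_cast
  ring

end PSz


/-- The `p`-adic Schwarz lemma: `F` is a complete subfield of `ℂ_p` (abstracted as a complete
nonarchimedean normed field with `‖p‖ = 1/p`), `f = ∑ a_n x^n` is analytic on the closed ball of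
radius `t ≥ s > 0`, `Γ` is a finite subset of the closed ball of radius `s` of cardinality
`l ≥ 2`, `δ` is the minimal distance between distinct points of `Γ`, `μ` bounds the first `q`
derivatives of `f` on `Γ`, and `r_p = p^{-1/(p-1)}`.  If `δ ≤ 1` then
`|f|_s ≤ max((s/t)^{ql} |f|_t, μ (s/δ)^{ql-1} r_p^{-(q-1)})`. -/
theorem stmt_2 {p : ℕ} (hp : p.Prime)
    {F : Type*} [NormedField F] [CompleteSpace F] [IsUltrametricDist F]
    (hpF : ‖(p : F)‖ = (p : ℝ)⁻¹)
    (a : ℕ → F) (t s : ℝ) (hs : 0 < s) (hst : s ≤ t)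
    (hconv : Tendsto (fun n => ‖a n‖ * t ^ n) atTop (nhds 0))
    (q : ℕ) (hq : 0 < q)
    (Γ : Finset F) (hΓs : ∀ γ ∈ Γ, ‖γ‖ ≤ s) (hl : 2 ≤ Γ.card)
    (δ μ : ℝ)
    (hδ : δ = sInf {x : ℝ | ∃ γ ∈ Γ, ∃ γ' ∈ Γ, γ ≠ γ' ∧ x = ‖γ - γ'‖})
    (hμ : μ = sSup {x : ℝ | ∃ m, m < q ∧ ∃ γ ∈ Γ, x = ‖pseriesDeriv a m γ‖})
    (hδ1 : δ ≤ 1) :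
    gaussNorm a s ≤ max ((s / t) ^ (q * Γ.card) * gaussNorm a t)
      (μ * (s / δ) ^ (q * Γ.card - 1) * (((p : ℝ) ^ (-(1 : ℝ) / ((p : ℝ) - 1)))⁻¹) ^ (q - 1)) := by
  classical
  have ht : (0:ℝ) < t := lt_of_lt_of_le hs hst
  set l := Γ.card with hldef
  set N := q * l with hNdef
  have hN2 : 2 ≤ N := le_trans hl (by
    calc l = 1 * l := (one_mul l).symm
      _ ≤ q * l := Nat.mul_le_mul_right l hq)
  have hΓne : Γ.Nonempty := Finset.card_pos.mp (by omega)
  obtain ⟨γ₀, hγ₀⟩ := hΓne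
  set L := Γ.toList with hLdef
  have hLlen : L.length = l := Finset.length_toList Γ
  have hLnd : L.Nodup := Finset.nodup_toList Γ
  set x : ℕ → F := fun i => L.getD (i / q) γ₀ with hxdef
  have hmemx : ∀ i, x i ∈ Γ := by
    intro i
    by_cases h : i / q < L.length
    · show L.getD (i / q) γ₀ ∈ Γ
      rw [List.getD_eq_getElem L γ₀ h]
      exact Finset.mem_toList.mp (L.getElem_mem h)
    · show L.getD (i / q) γ₀ ∈ Γ
      rw [List.getD_eq_default L γ₀ (not_lt.mp h)]
      exact hγ₀
  have hxs : ∀ i, ‖x i‖ ≤ s := fun i => hΓs _ (hmemx i)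
  have hx_t : ∀ i, ‖x i‖ ≤ t := fun i => (hxs i).trans hst
  have hdiv : ∀ i, i < N → i / q < L.length := by
    intro i hi
    rw [hLlen, Nat.div_lt_iff_lt_mul hq]
    calc i < N := hi
      _ = l * q := by rw [hNdef, Nat.mul_comm]
  have hgroup : ∀ i j, i < N → j < N → x i = x j → i / q = j / q := by
    intro i j hi hj hxij
    have h1 := hdiv i hi
    have h2 := hdiv j hj
    have hxij' : L[i / q] = L[j / q] := by
      rw [← List.getD_eq_getElem L γ₀ h1, ← List.getD_eq_getElem L γ₀ h2]
      exact hxij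
    exact hLnd.getElem_inj_iff.mp hxij'
  -- δ facts
  have hSfin : {r : ℝ | ∃ γ ∈ Γ, ∃ γ' ∈ Γ, γ ≠ γ' ∧ r = ‖γ - γ'‖}.Finite := by
    apply Set.Finite.subset (Set.Finite.image (fun pr : F × F => ‖pr.1 - pr.2‖)
      ((Γ.finite_toSet).prod (Γ.finite_toSet)))
    rintro r ⟨γ, hγ, γ', hγ', hne, rfl⟩
    exact ⟨(γ, γ'), ⟨hγ, hγ'⟩, rfl⟩
  have hSne : {r : ℝ | ∃ γ ∈ Γ, ∃ γ' ∈ Γ, γ ≠ γ' ∧ r = ‖γ - γ'‖}.Nonempty := by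
    obtain ⟨γa, hγa, γb, hγb, hab⟩ := Finset.one_lt_card.mp hl
    exact ⟨‖γa - γb‖, γa, hγa, γb, hγb, hab, rfl⟩
  have hδmem : δ ∈ {r : ℝ | ∃ γ ∈ Γ, ∃ γ' ∈ Γ, γ ≠ γ' ∧ r = ‖γ - γ'‖} := by
    rw [hδ]
    exact hSne.csInf_mem hSfin
  obtain ⟨γa, hγa, γb, hγb, hab, hδeq⟩ := hδmem
  have hδ0 : 0 < δ := by
    rw [hδeq]
    exact norm_pos_iff.mpr (sub_ne_zero.mpr hab)
  have hδs : δ ≤ s := by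
    rw [hδeq]
    exact (PSz.unorm_sub_le_max γa γb).trans (max_le (hΓs _ hγa) (hΓs _ hγb))
  have hsep : ∀ i j, i < N → j < N → x i ≠ x j → δ ≤ ‖x i - x j‖ := by
    intro i j _ _ hne
    rw [hδ]
    apply csInf_le
    · refine ⟨0, ?_⟩
      rintro r ⟨γ, _, γ', _, _, rfl⟩
      exact norm_nonneg _
    · exact ⟨x i, hmemx i, x j, hmemx j, hne, rfl⟩
  -- μ facts
  have hμfin : {r : ℝ | ∃ m, m < q ∧ ∃ γ ∈ Γ, r = ‖pseriesDeriv a m γ‖}.Finite := by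
    apply Set.Finite.subset (Set.Finite.image (fun pr : ℕ × F => ‖pseriesDeriv a pr.1 pr.2‖)
      ((Set.finite_Iio q).prod Γ.finite_toSet))
    rintro r ⟨m, hm, γ, hγ, rfl⟩
    exact ⟨(m, γ), ⟨hm, hγ⟩, rfl⟩
  have hμge : ∀ m, m < q → ∀ γ ∈ Γ, ‖pseriesDeriv a m γ‖ ≤ μ := by
    intro m hm γ hγ
    rw [hμ]
    exact le_csSup hμfin.bddAbove ⟨m, hm, γ, hγ, rfl⟩
  have hμ0 : 0 ≤ μ := le_trans (norm_nonneg _) (hμge 0 hq γ₀ hγ₀)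
  -- R facts
  set R := (((p : ℝ) ^ (-(1:ℝ) / ((p:ℝ) - 1)))⁻¹) ^ (q - 1) with hRdef
  have hp1 : (1:ℝ) < (p:ℝ) := by exact_mod_cast hp.one_lt
  have hp0 : (0:ℝ) ≤ (p:ℝ) := by positivity
  have hR : R = (p:ℝ) ^ (((q - 1 : ℕ) : ℝ) / ((p:ℝ) - 1)) := by
    rw [hRdef, show -(1:ℝ) / ((p:ℝ) - 1) = -(1 / ((p:ℝ) - 1)) by ring, Real.rpow_neg hp0, inv_inv,
      ← Real.rpow_natCast ((p:ℝ) ^ ((1:ℝ)/((p:ℝ)-1))) (q - 1), ← Real.rpow_mul hp0]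
    congr 1
    ring
  have hR1 : 1 ≤ R := by
    rw [hR]
    exact Real.one_le_rpow hp1.le (div_nonneg (Nat.cast_nonneg _) (by linarith))
  have hR0 : (0:ℝ) ≤ R := zero_le_one.trans hR1
  have ha : PSz.Decay t a := hconv
  -- pure window bound
  have hpure : ∀ i j, i + j < N → x (i + j) = x i → ‖PSz.dd a x i j‖ ≤ μ * R := by
    intro i j hij heq
    have hgq : i / q = (i + j) / q := hgroup i (i + j) (by omega) hij heq.symm
    have hjq : j < q := by
      have e1 : (i / q) * q ≤ i := Nat.div_mul_le_self i q
      have e2 : q * ((i + j) / q) + (i + j) % q = i + j := Nat.div_add_mod (i + j) q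
      have e3 : (i + j) % q < q := Nat.mod_lt _ hq
      rw [← hgq] at e2
      have e4 : q * (i / q) ≤ i := by
        rw [Nat.mul_comm]
        exact e1
      have e5 : i + j ≤ i + (i + j) % q := by
        calc i + j = q * (i / q) + (i + j) % q := e2.symm
          _ ≤ i + (i + j) % q := Nat.add_le_add_right e4 _
      have e6 : j ≤ (i + j) % q := Nat.le_of_add_le_add_left e5
      omega
    have hall : ∀ k, k < j → x (i + k) = x i := by
      intro k hk
      have h1 : i / q ≤ (i + k) / q := Nat.div_le_div_right (by omega)
      have h2 : (i + k) / q ≤ (i + j) / q := Nat.div_le_div_right (by omega)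
      rw [← hgq] at h2
      have h3 : (i + k) / q = i / q := le_antisymm h2 h1
      show L.getD ((i + k) / q) γ₀ = L.getD (i / q) γ₀
      rw [h3]
    have hch : PSz.chainA a x i j = (PSz.Dop (x i))^[j] a := PSz.chainA_pure j i hall
    have hdd : PSz.dd a x i j = PSz.hasse j a (x i) := by
      rw [PSz.dd, hch, heq, PSz.ev_iter_Dop ht (hx_t i) j a ha]
    have hPD : ‖pseriesDeriv a j (x i)‖
        = ‖((j.factorial : ℕ) : F)‖ * ‖PSz.hasse j a (x i)‖ := by
      rw [PSz.pseriesDeriv_eq_hasse, norm_mul]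
    have hfacpos : 0 < ‖((j.factorial : ℕ) : F)‖ := by
      rw [PSz.norm_natCast_eq p hp hpF _ j.factorial_ne_zero]
      positivity
    have h1 : ‖PSz.hasse j a (x i)‖
        = ‖pseriesDeriv a j (x i)‖ * ‖((j.factorial : ℕ) : F)‖⁻¹ := by
      rw [hPD]
      field_simp
    rw [hdd, h1]
    apply mul_le_mul (hμge j hjq (x i) (hmemx i)) ?_ (by positivity) hμ0
    rw [hR]
    exact PSz.norm_factorial_inv_le p hp hpF hq hjq
  have hddb : ∀ j i, i + j < N → ‖PSz.dd a x i j‖ * δ ^ j ≤ μ * R :=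
    PSz.dd_bound ht ha hx_t N (μ * R) δ (by positivity) hδ0 hδ1 hsep hpure
  have hGb : BddAbove (Set.range fun n => ‖a n‖ * t ^ n) := hconv.bddAbove_range
  have hG : ∀ n, ‖a n‖ * t ^ n ≤ gaussNorm a t := fun n => le_ciSup hGb n
  have hG0 : 0 ≤ gaussNorm a t := le_trans (by positivity) (hG 0)
  set B := max ((s / t) ^ N * gaussNorm a t) (μ * (s / δ) ^ (N - 1) * R) with hBdef
  have hsδ : 1 ≤ s / δ := (one_le_div hδ0).mpr hδs
  have hBc : ∀ j, j < N → ‖PSz.dd a x 0 j‖ * s ^ j ≤ B := by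
    intro j hj
    have h1 := hddb j 0 (by omega)
    have hsj : s ^ j = δ ^ j * (s / δ) ^ j := by
      rw [← mul_pow]
      congr 1
      field_simp
    calc ‖PSz.dd a x 0 j‖ * s ^ j = (‖PSz.dd a x 0 j‖ * δ ^ j) * (s / δ) ^ j := by
          rw [hsj]
          ring
      _ ≤ (μ * R) * (s / δ) ^ j := mul_le_mul_of_nonneg_right h1 (by positivity)
      _ ≤ (μ * R) * (s / δ) ^ (N - 1) :=
          mul_le_mul_of_nonneg_left (pow_le_pow_right₀ hsδ (by omega)) (by positivity)
      _ = μ * (s / δ) ^ (N - 1) * R := by ring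
      _ ≤ B := le_max_right _ _
  have hB1 : gaussNorm a t * (s / t) ^ N ≤ B :=
    le_trans (le_of_eq (mul_comm _ _)) (le_max_left _ _)
  have hcoeff := PSz.coeff_bound ht ha hs hst hxs N (gaussNorm a t) B hG hG0 hBc hB1
  rw [gaussNorm]
  exact ciSup_le hcoeff
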